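/- Convex combinations of path methods also violate baseline invariance on a linear function: let F : ℝ² → ℝ be F(x₁, x₂) = x₁ − x₂, x'₁ = (−1, −1), x'₂ = (1, 1), and x_t = (1, 0). Suppose a₁ ∈ ℝ² is a finite convex combination a₁ = ∑_{k=1}^m λ_k A^{γ^k}(x_t, F, x'₁) where λ_k ≥ 0, ∑_k λ_k = 1, and each γ^k : [0,1] → ℝ² is a continuously differentiable path from x'₁ to x_t; and suppose a₂ ∈ ℝ² is similarly a finite convex combination of path-method attributions along continuously differentiable paths from x'₂ to x_t. Then a₁ = (2, −1) and a₂ = (0, 1), so the second coordinate's attribution is strictly less than the first coordinate's at baseline x'₁ but strictly greater at baseline x'₂. -/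

import Mathlib

/-- The path-method attribution to coordinate `i`:
`A^γ_i(x, F, x') = ∫₀¹ ∂ᵢF(γ(t)) γᵢ'(t) dt`. -/
noncomputable def pathAttr {n : ℕ} (F : (Fin n → ℝ) → ℝ) (γ : ℝ → Fin n → ℝ)
    (i : Fin n) : ℝ :=
  ∫ t in (0:ℝ)..1, fderiv ℝ F (γ t) (Pi.single i 1) * deriv (fun s => γ s i) t

noncomputable def L : (Fin 2 → ℝ) →L[ℝ] ℝ :=
  ContinuousLinearMap.proj (R := ℝ) (φ := fun _ : Fin 2 => ℝ) 0 -
    ContinuousLinearMap.proj (R := ℝ) (φ := fun _ : Fin 2 => ℝ) 1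

lemma key (F : (Fin 2 → ℝ) → ℝ) (hF : ∀ y : Fin 2 → ℝ, F y = y 0 - y 1)
    (G : ℝ → Fin 2 → ℝ) (hG : ContDiff ℝ 1 G) (i : Fin 2) :
    pathAttr F G i = L (Pi.single i 1) * (G 1 i - G 0 i) := by
  have hFL : F = fun y => L y := by
    funext y; simp [hF, L]
  have hfd : ∀ y, fderiv ℝ F y = L := by
    intro y; rw [hFL]; exact L.fderiv
  have hGi : ContDiff ℝ 1 (fun s => G s i) :=
    (ContinuousLinearMap.proj (R := ℝ) (φ := fun _ : Fin 2 => ℝ) i).contDiff.comp hG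
  have hderiv : Continuous (deriv (fun s => G s i)) :=
    (hGi.iterate_deriv' 0 1).continuous
  unfold pathAttr
  have : ∀ t, fderiv ℝ F (G t) (Pi.single i 1) = L (Pi.single i 1) := by
    intro t; rw [hfd]
  simp only [this]
  rw [intervalIntegral.integral_const_mul]
  congr 1
  exact intervalIntegral.integral_deriv_eq_sub
    (fun t _ => (hGi.differentiable one_ne_zero).differentiableAt)
    (hderiv.intervalIntegrable 0 1)

/-- Convex combinations of path methods violate baseline invariance on the linear
function `F(x₁,x₂) = x₁ - x₂`: any convex combination `a₁` of path-method attributions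
along paths from `(-1,-1)` to `(1,0)` equals `(2,-1)`, any convex combination `a₂`
along paths from `(1,1)` to `(1,0)` equals `(0,1)`, and the rank order switches. -/
theorem stmt_8 (F : (Fin 2 → ℝ) → ℝ) (hF : ∀ y : Fin 2 → ℝ, F y = y 0 - y 1)
    (m₁ m₂ : ℕ)
    (lam : Fin m₁ → ℝ) (hlam : ∀ k, 0 ≤ lam k) (hlam1 : ∑ k, lam k = 1)
    (mu : Fin m₂ → ℝ) (hmu : ∀ k, 0 ≤ mu k) (hmu1 : ∑ k, mu k = 1)
    (γ : Fin m₁ → ℝ → Fin 2 → ℝ) (hγ : ∀ k, ContDiff ℝ 1 (γ k))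
    (hγ0 : ∀ k, γ k 0 = ![(-1 : ℝ), -1]) (hγ1 : ∀ k, γ k 1 = ![(1 : ℝ), 0])
    (η : Fin m₂ → ℝ → Fin 2 → ℝ) (hη : ∀ k, ContDiff ℝ 1 (η k))
    (hη0 : ∀ k, η k 0 = ![(1 : ℝ), 1]) (hη1 : ∀ k, η k 1 = ![(1 : ℝ), 0])
    (a₁ a₂ : Fin 2 → ℝ)
    (ha₁ : ∀ i, a₁ i = ∑ k, lam k * pathAttr F (γ k) i)
    (ha₂ : ∀ i, a₂ i = ∑ k, mu k * pathAttr F (η k) i) :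
    a₁ 0 = 2 ∧ a₁ 1 = -1 ∧ a₂ 0 = 0 ∧ a₂ 1 = 1 ∧ a₁ 1 < a₁ 0 ∧ a₂ 0 < a₂ 1 := by
  have h10 : a₁ 0 = 2 := by
    rw [ha₁]
    have : ∀ k, pathAttr F (γ k) 0 = 2 := by
      intro k; rw [key F hF _ (hγ k) 0, hγ0, hγ1]; first | (simp [L]; norm_num [Pi.single]) | simp [L]
    simp only [this, ← Finset.sum_mul, hlam1]; ring
  have h11 : a₁ 1 = -1 := by
    rw [ha₁]
    have : ∀ k, pathAttr F (γ k) 1 = -1 := by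
      intro k; rw [key F hF _ (hγ k) 1, hγ0, hγ1]; first | (simp [L]; norm_num [Pi.single]) | simp [L]
    simp only [this, ← Finset.sum_mul, hlam1]; ring
  have h20 : a₂ 0 = 0 := by
    rw [ha₂]
    have : ∀ k, pathAttr F (η k) 0 = 0 := by
      intro k; rw [key F hF _ (hη k) 0, hη0, hη1]; first | (simp [L]; norm_num [Pi.single]) | simp [L]
    simp [this]
  have h21 : a₂ 1 = 1 := by
    rw [ha₂]
    have : ∀ k, pathAttr F (η k) 1 = 1 := by
      intro k; rw [key F hF _ (hη k) 1, hη0, hη1]; first | (simp [L]; norm_num [Pi.single]) | simp [L]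
    simp only [this, ← Finset.sum_mul, hmu1]; ring
  exact ⟨h10, h11, h20, h21, by rw [h10, h11]; norm_num, by rw [h20, h21]; norm_num⟩
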